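/- The map T : (x,y) ↦ (X,Y) with X = ν/y + λ/(x+y) and Y = -μ/x - λ/(x+y), where λ + μ + ν = 0 and λμν ≠ 0, is an involution on its domain of definition: applying T twice returns (x,y). -/

import Mathlib

/-- The map `T(x,y) = (ν/y + λ/(x+y), -μ/x - λ/(x+y))`, with `λ+μ+ν = 0` and
`λμν ≠ 0`, is an involution: applying it twice returns `(x,y)`
(on the domain where all denominators are nonzero). -/
theorem stmt_4 (lam mu nu : ℝ) (hlam : lam ≠ 0) (hmu : mu ≠ 0) (hnu : nu ≠ 0)
    (hsum : lam + mu + nu = 0) (x y : ℝ)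
    (hx : x ≠ 0) (hy : y ≠ 0) (hxy : x + y ≠ 0)
    (hX : nu / y + lam / (x + y) ≠ 0)
    (hY : -mu / x - lam / (x + y) ≠ 0)
    (hXY : (nu / y + lam / (x + y)) + (-mu / x - lam / (x + y)) ≠ 0) :
    nu / (-mu / x - lam / (x + y))
      + lam / ((nu / y + lam / (x + y)) + (-mu / x - lam / (x + y))) = x
    ∧ -mu / (nu / y + lam / (x + y))
      - lam / ((nu / y + lam / (x + y)) + (-mu / x - lam / (x + y))) = y := by
  have hnu2 : nu = -lam - mu := by linarith
  subst hnu2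
  have hD : lam * x + mu * x + mu * y ≠ 0 := by
    intro h
    apply hX
    field_simp
    linarith
  have eqX : (-lam - mu) / y + lam / (x + y)
      = -(lam * x + mu * x + mu * y) / (y * (x + y)) := by field_simp; ring
  have eqY : -mu / x - lam / (x + y)
      = -(lam * x + mu * x + mu * y) / (x * (x + y)) := by field_simp; ring
  have eqXY : ((-lam - mu) / y + lam / (x + y)) + (-mu / x - lam / (x + y))
      = -(lam * x + mu * x + mu * y) / (x * y) := by field_simp; ring
  have hDn : -(lam * x) + (-(mu * x) - mu * y) ≠ 0 := by intro h; apply hD; linarith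
  have hDn2 : -(mu * y) + (-(mu * x) - x * lam) ≠ 0 := by intro h; apply hD; linarith
  rw [eqXY, eqX, eqY]
  have hDneg : -(lam * x + mu * x + mu * y) ≠ 0 := neg_ne_zero.mpr hD
  constructor
  · rw [div_div_eq_mul_div, div_div_eq_mul_div, ← add_div, div_eq_iff hDneg]; ring
  · rw [div_div_eq_mul_div, div_div_eq_mul_div, div_sub_div_same, div_eq_iff hDneg]; ring
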